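/- Let ω > 0, let f: ℝ × ℝ³ × ℝ³ → ℝ and E = (E₁,E₂,E₃): ℝ × ℝ³ → ℝ³ be continuously differentiable, and fix t ∈ ℝ, s ∈ ℝ, x, v ∈ ℝ³. Define G_t(s,x) := (cos(ω(s−t))E₁(s,x) − sin(ω(s−t))E₂(s,x), sin(ω(s−t))E₁(s,x) + cos(ω(s−t))E₂(s,x), E₃(s,x)) and H_t(s,x) := ((sin(ω(s−t))/ω)E₁(s,x) + ((cos(ω(s−t))−1)/ω)E₂(s,x), ((1−cos(ω(s−t)))/ω)E₁(s,x) + (sin(ω(s−t))/ω)E₂(s,x), (s−t)E₃(s,x)). Then, with (X,V) = (X(s;t,x,v), V(s;t,x,v)) the magnetized free characteristics, the following pointwise identity holds: div_v [ (f G_t)(s, X(s;t,x,v), V(s;t,x,v)) ] = [div_v(f E)](s, X(s;t,x,v), V(s;t,x,v)) + div_x [ (f H_t)(s, X(s;t,x,v), V(s;t,x,v)) ], where on the left-hand side and in the last term the divergences are taken with respect to the free variables v and x of the composite functions, while [div_v(f E)] denotes the v-divergence of (w ↦ f(s,y,w)E(s,y)) evaluated at the point (s, X(s;t,x,v), V(s;t,x,v)).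 -/

import Mathlib

open Real

/-- The velocity component of the magnetized free characteristics. -/
noncomputable def Vc (ω s t : ℝ) (v : Fin 3 → ℝ) : Fin 3 → ℝ :=
  ![v 0 * Real.cos (ω * (s - t)) + v 1 * Real.sin (ω * (s - t)),
    -(v 0 * Real.sin (ω * (s - t))) + v 1 * Real.cos (ω * (s - t)),
    v 2]

/-- The position component of the magnetized free characteristics. -/
noncomputable def Xc (ω s t : ℝ) (x v : Fin 3 → ℝ) : Fin 3 → ℝ :=
  ![x 0 + v 0 / ω * Real.sin (ω * (s - t)) + v 1 / ω * (1 - Real.cos (ω * (s - t))),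
    x 1 + v 0 / ω * (Real.cos (ω * (s - t)) - 1) + v 1 / ω * Real.sin (ω * (s - t)),
    x 2 + v 2 * (s - t)]

/-- The divergence of a vector field on `ℝ³`. -/
noncomputable def divg (F : (Fin 3 → ℝ) → (Fin 3 → ℝ)) (u : Fin 3 → ℝ) : ℝ :=
  ∑ i, fderiv ℝ F u (Pi.single i 1) i

/-- The rotated field `G_t(s,x)` built from `E`. -/
noncomputable def Gt (ω t : ℝ) (E : ℝ × (Fin 3 → ℝ) → (Fin 3 → ℝ))
    (p : ℝ × (Fin 3 → ℝ)) : Fin 3 → ℝ :=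
  ![Real.cos (ω * (p.1 - t)) * E p 0 - Real.sin (ω * (p.1 - t)) * E p 1,
    Real.sin (ω * (p.1 - t)) * E p 0 + Real.cos (ω * (p.1 - t)) * E p 1,
    E p 2]

/-- The field `H_t(s,x)` built from `E`. -/
noncomputable def Ht (ω t : ℝ) (E : ℝ × (Fin 3 → ℝ) → (Fin 3 → ℝ))
    (p : ℝ × (Fin 3 → ℝ)) : Fin 3 → ℝ :=
  ![Real.sin (ω * (p.1 - t)) / ω * E p 0 + (Real.cos (ω * (p.1 - t)) - 1) / ω * E p 1,
    (1 - Real.cos (ω * (p.1 - t))) / ω * E p 0 + Real.sin (ω * (p.1 - t)) / ω * E p 1,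
    (p.1 - t) * E p 2]

noncomputable def LVm (ω s t : ℝ) : (Fin 3 → ℝ) →L[ℝ] (Fin 3 → ℝ) :=
  (Matrix.toLin' !![Real.cos (ω*(s-t)), Real.sin (ω*(s-t)), 0;
     -Real.sin (ω*(s-t)), Real.cos (ω*(s-t)), 0;
     (0:ℝ), 0, 1]).toContinuousLinearMap

noncomputable def LXm (ω s t : ℝ) : (Fin 3 → ℝ) →L[ℝ] (Fin 3 → ℝ) :=
  (Matrix.toLin' !![Real.sin (ω*(s-t))/ω, (1 - Real.cos (ω*(s-t)))/ω, 0;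
     (Real.cos (ω*(s-t)) - 1)/ω, Real.sin (ω*(s-t))/ω, 0;
     (0:ℝ), 0, s - t]).toContinuousLinearMap

lemma Vc_eq (ω s t : ℝ) (w : Fin 3 → ℝ) : Vc ω s t w = LVm ω s t w := by
  funext i
  fin_cases i <;>
    simp [Vc, LVm, Matrix.toLin'_apply, Matrix.mulVec, dotProduct,
      Fin.sum_univ_three] <;> ring

lemma Xc_eq (ω s t : ℝ) (x w : Fin 3 → ℝ) : Xc ω s t x w = x + LXm ω s t w := by
  funext i
  fin_cases i <;>
    simp [Xc, LXm, Matrix.toLin'_apply, Matrix.mulVec, dotProduct,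
      Fin.sum_univ_three] <;> ring

lemma LVm_single (ω s t : ℝ) (j : Fin 3) :
    LVm ω s t (Pi.single j 1) = fun i =>
      !![Real.cos (ω*(s-t)), Real.sin (ω*(s-t)), 0;
         -Real.sin (ω*(s-t)), Real.cos (ω*(s-t)), 0;
         (0:ℝ), 0, 1] i j := by
  simp [LVm, Matrix.toLin'_apply]
  funext i; fin_cases i <;> fin_cases j <;> rfl

lemma LXm_single (ω s t : ℝ) (j : Fin 3) :
    LXm ω s t (Pi.single j 1) = fun i =>
      !![Real.sin (ω*(s-t))/ω, (1 - Real.cos (ω*(s-t)))/ω, 0;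
         (Real.cos (ω*(s-t)) - 1)/ω, Real.sin (ω*(s-t))/ω, 0;
         (0:ℝ), 0, s - t] i j := by
  simp [LXm, Matrix.toLin'_apply]
  funext i; fin_cases i <;> fin_cases j <;> rfl

lemma clm_decomp3 (D : (ℝ × (Fin 3 → ℝ) × (Fin 3 → ℝ)) →L[ℝ] ℝ) (u w : Fin 3 → ℝ) :
    D (0, u, w) = u 0 * D (0, Pi.single 0 1, 0) + u 1 * D (0, Pi.single 1 1, 0)
      + u 2 * D (0, Pi.single 2 1, 0) + w 0 * D (0, 0, Pi.single 0 1)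
      + w 1 * D (0, 0, Pi.single 1 1) + w 2 * D (0, 0, Pi.single 2 1) := by
  have hu : ((0:ℝ), u, w) =
      u 0 • (((0:ℝ), Pi.single 0 1, 0) : ℝ × (Fin 3 → ℝ) × (Fin 3 → ℝ))
      + u 1 • (((0:ℝ), Pi.single 1 1, 0) : ℝ × (Fin 3 → ℝ) × (Fin 3 → ℝ))
      + u 2 • (((0:ℝ), Pi.single 2 1, 0) : ℝ × (Fin 3 → ℝ) × (Fin 3 → ℝ))
      + w 0 • (((0:ℝ), 0, Pi.single 0 1) : ℝ × (Fin 3 → ℝ) × (Fin 3 → ℝ))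
      + w 1 • (((0:ℝ), 0, Pi.single 1 1) : ℝ × (Fin 3 → ℝ) × (Fin 3 → ℝ))
      + w 2 • (((0:ℝ), 0, Pi.single 2 1) : ℝ × (Fin 3 → ℝ) × (Fin 3 → ℝ)) := by
    refine Prod.ext (by simp) (Prod.ext ?_ ?_) <;> funext i <;> fin_cases i <;>
      simp [Pi.single_apply]
  rw [hu]
  simp only [map_add, map_smul, smul_eq_mul, ContinuousLinearMap.add_apply,
    ContinuousLinearMap.smul_apply, Pi.add_apply, Pi.smul_apply]

lemma clm_decomp2 (D : (ℝ × (Fin 3 → ℝ)) →L[ℝ] (Fin 3 → ℝ)) (u : Fin 3 → ℝ) (j : Fin 3) :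
    D (0, u) j = u 0 * D (0, Pi.single 0 1) j + u 1 * D (0, Pi.single 1 1) j
      + u 2 * D (0, Pi.single 2 1) j := by
  have hu : ((0:ℝ), u) = u 0 • (((0:ℝ), Pi.single 0 1) : ℝ × (Fin 3 → ℝ))
      + u 1 • (((0:ℝ), Pi.single 1 1) : ℝ × (Fin 3 → ℝ))
      + u 2 • (((0:ℝ), Pi.single 2 1) : ℝ × (Fin 3 → ℝ)) := by
    refine Prod.ext (by simp) ?_
    funext i; fin_cases i <;> simp [Pi.single_apply]
  rw [hu]
  simp only [map_add, map_smul, smul_eq_mul, ContinuousLinearMap.add_apply,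
    ContinuousLinearMap.smul_apply, Pi.add_apply, Pi.smul_apply]

lemma divg_eq_sum (F : (Fin 3 → ℝ) → (Fin 3 → ℝ)) (u : Fin 3 → ℝ)
    (h : ∀ i, DifferentiableAt ℝ (fun w => F w i) u) :
    divg F u = ∑ i, fderiv ℝ (fun w => F w i) u (Pi.single i 1) := by
  have hF : HasFDerivAt F
      (ContinuousLinearMap.pi (fun i => fderiv ℝ (fun w => F w i) u)) u :=
    hasFDerivAt_pi.2 (fun i => (h i).hasFDerivAt)
  unfold divg
  rw [hF.fderiv]
  simp


lemma Df_dir (D : (ℝ × (Fin 3 → ℝ) × (Fin 3 → ℝ)) →L[ℝ] ℝ) (ω s t : ℝ) (j : Fin 3) :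
    D (0, LXm ω s t (Pi.single j 1), LVm ω s t (Pi.single j 1)) =
      ![Real.sin (ω*(s-t))/ω * D (0, Pi.single 0 1, 0)
          + (Real.cos (ω*(s-t)) - 1)/ω * D (0, Pi.single 1 1, 0)
          + Real.cos (ω*(s-t)) * D (0, 0, Pi.single 0 1)
          - Real.sin (ω*(s-t)) * D (0, 0, Pi.single 1 1),
        (1 - Real.cos (ω*(s-t)))/ω * D (0, Pi.single 0 1, 0)
          + Real.sin (ω*(s-t))/ω * D (0, Pi.single 1 1, 0)
          + Real.sin (ω*(s-t)) * D (0, 0, Pi.single 0 1)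
          + Real.cos (ω*(s-t)) * D (0, 0, Pi.single 1 1),
        (s - t) * D (0, Pi.single 2 1, 0) + D (0, 0, Pi.single 2 1)] j := by
  rw [LXm_single, LVm_single, clm_decomp3]
  fin_cases j <;> simp <;> ring

lemma DE_dir (D : (ℝ × (Fin 3 → ℝ)) →L[ℝ] (Fin 3 → ℝ)) (ω s t : ℝ) (j k : Fin 3) :
    D (0, LXm ω s t (Pi.single j 1)) k =
      ![Real.sin (ω*(s-t))/ω * D (0, Pi.single 0 1) k
          + (Real.cos (ω*(s-t)) - 1)/ω * D (0, Pi.single 1 1) k,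
        (1 - Real.cos (ω*(s-t)))/ω * D (0, Pi.single 0 1) k
          + Real.sin (ω*(s-t))/ω * D (0, Pi.single 1 1) k,
        (s - t) * D (0, Pi.single 2 1) k] j := by
  rw [LXm_single, clm_decomp2]
  fin_cases j <;> simp <;> ring

/-- the pointwise divergence identity
`div_v [(f G_t)(s, X(s;t,x,v), V(s;t,x,v))]
  = [div_v (f E)](s, X(s;t,x,v), V(s;t,x,v))
    + div_x [(f H_t)(s, X(s;t,x,v), V(s;t,x,v))]`,
where on the left (resp. last term) the divergence is taken with respect to the free
variable `v` (resp. `x`) of the composite function, and `[div_v (f E)]` is the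
`v`-divergence of `w ↦ f(s,y,w) E(s,y)` evaluated at `(s, X(s;t,x,v), V(s;t,x,v))`. -/
theorem div_identity_magnetized (ω : ℝ) (hω : 0 < ω)
    (f : ℝ × (Fin 3 → ℝ) × (Fin 3 → ℝ) → ℝ) (hf : ContDiff ℝ 1 f)
    (E : ℝ × (Fin 3 → ℝ) → (Fin 3 → ℝ)) (hE : ContDiff ℝ 1 E)
    (t s : ℝ) (x v : Fin 3 → ℝ) :
    divg (fun w => f (s, Xc ω s t x w, Vc ω s t w) • Gt ω t E (s, Xc ω s t x w)) v
      = divg (fun w => f (s, Xc ω s t x v, w) • E (s, Xc ω s t x v)) (Vc ω s t v)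
        + divg (fun z => f (s, Xc ω s t z v, Vc ω s t v) • Ht ω t E (s, Xc ω s t z v)) x := by
  have hω' : ω ≠ 0 := ne_of_gt hω
  have hfd : ∀ p, DifferentiableAt ℝ f p := fun p => (hf.differentiable one_ne_zero).differentiableAt
  have hEd : ∀ p, DifferentiableAt ℝ E p := fun p => (hE.differentiable one_ne_zero).differentiableAt
  -- derivatives of the affine maps
  have hXw : HasFDerivAt (fun w => Xc ω s t x w) (LXm ω s t) v := by
    have h : (fun w => Xc ω s t x w) = fun w => x + LXm ω s t w :=
      funext fun w => Xc_eq ω s t x w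
    rw [h]; exact (LXm ω s t).hasFDerivAt.const_add x
  have hVw : HasFDerivAt (fun w : Fin 3 → ℝ => Vc ω s t w) (LVm ω s t) v := by
    have h : (fun w : Fin 3 → ℝ => Vc ω s t w) = fun w => LVm ω s t w :=
      funext fun w => Vc_eq ω s t w
    rw [h]; exact (LVm ω s t).hasFDerivAt
  have hXz : HasFDerivAt (fun z => Xc ω s t z v) (ContinuousLinearMap.id ℝ (Fin 3 → ℝ)) x := by
    have h : (fun z => Xc ω s t z v) = fun z => z + LXm ω s t v :=
      funext fun z => Xc_eq ω s t z v
    rw [h]; exact (hasFDerivAt_id x).add_const _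
  -- composite derivative for f in w
  have hfA1 : HasFDerivAt (fun w => f (s, Xc ω s t x w, Vc ω s t w))
      ((fderiv ℝ f (s, Xc ω s t x v, Vc ω s t v)).comp
        ((0 : (Fin 3 → ℝ) →L[ℝ] ℝ).prod ((LXm ω s t).prod (LVm ω s t)))) v :=
    (hfd _).hasFDerivAt.comp v (HasFDerivAt.prodMk (hasFDerivAt_const s v) (hXw.prodMk hVw))
  have hEA1 : HasFDerivAt (fun w => E (s, Xc ω s t x w))
      ((fderiv ℝ E (s, Xc ω s t x v)).comp
        ((0 : (Fin 3 → ℝ) →L[ℝ] ℝ).prod (LXm ω s t))) v :=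
    (hEd _).hasFDerivAt.comp v (HasFDerivAt.prodMk (hasFDerivAt_const s v) hXw)
  have hE1j : ∀ j : Fin 3, HasFDerivAt (fun w => E (s, Xc ω s t x w) j)
      ((ContinuousLinearMap.proj j).comp
        ((fderiv ℝ E (s, Xc ω s t x v)).comp
          ((0 : (Fin 3 → ℝ) →L[ℝ] ℝ).prod (LXm ω s t)))) v :=
    fun j => (ContinuousLinearMap.proj j :
      (Fin 3 → ℝ) →L[ℝ] ℝ).hasFDerivAt.comp v hEA1
  have hfA2 : HasFDerivAt (fun w : Fin 3 → ℝ => f (s, Xc ω s t x v, w))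
      ((fderiv ℝ f (s, Xc ω s t x v, Vc ω s t v)).comp
        ((0 : (Fin 3 → ℝ) →L[ℝ] ℝ).prod
          ((0 : (Fin 3 → ℝ) →L[ℝ] (Fin 3 → ℝ)).prod (ContinuousLinearMap.id ℝ (Fin 3 → ℝ)))))
      (Vc ω s t v) :=
    (hfd _).hasFDerivAt.comp _
      (HasFDerivAt.prodMk (hasFDerivAt_const s _) (HasFDerivAt.prodMk (hasFDerivAt_const _ _) (hasFDerivAt_id _)))
  have hfA3 : HasFDerivAt (fun z => f (s, Xc ω s t z v, Vc ω s t v))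
      ((fderiv ℝ f (s, Xc ω s t x v, Vc ω s t v)).comp
        ((0 : (Fin 3 → ℝ) →L[ℝ] ℝ).prod
          ((ContinuousLinearMap.id ℝ (Fin 3 → ℝ)).prod
            (0 : (Fin 3 → ℝ) →L[ℝ] (Fin 3 → ℝ))))) x :=
    (hfd _).hasFDerivAt.comp x
      (HasFDerivAt.prodMk (hasFDerivAt_const s x) (hXz.prodMk (hasFDerivAt_const _ x)))
  have hEA3 : HasFDerivAt (fun z => E (s, Xc ω s t z v))
      ((fderiv ℝ E (s, Xc ω s t x v)).comp
        ((0 : (Fin 3 → ℝ) →L[ℝ] ℝ).prod (ContinuousLinearMap.id ℝ (Fin 3 → ℝ)))) x :=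
    (hEd _).hasFDerivAt.comp x (HasFDerivAt.prodMk (hasFDerivAt_const s x) hXz)
  have hE3j : ∀ j : Fin 3, HasFDerivAt (fun z => E (s, Xc ω s t z v) j)
      ((ContinuousLinearMap.proj j).comp
        ((fderiv ℝ E (s, Xc ω s t x v)).comp
          ((0 : (Fin 3 → ℝ) →L[ℝ] ℝ).prod (ContinuousLinearMap.id ℝ (Fin 3 → ℝ))))) x :=
    fun j => (ContinuousLinearMap.proj j :
      (Fin 3 → ℝ) →L[ℝ] ℝ).hasFDerivAt.comp x hEA3
  -- product rules for the nine scalar components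
  have h10 := hfA1.mul (((hE1j 0).const_mul (Real.cos (ω*(s-t)))).sub
    ((hE1j 1).const_mul (Real.sin (ω*(s-t)))))
  have h11 := hfA1.mul (((hE1j 0).const_mul (Real.sin (ω*(s-t)))).add
    ((hE1j 1).const_mul (Real.cos (ω*(s-t)))))
  have h12 := hfA1.mul (hE1j 2)
  have h20 := hfA2.mul_const (E (s, Xc ω s t x v) 0)
  have h21 := hfA2.mul_const (E (s, Xc ω s t x v) 1)
  have h22 := hfA2.mul_const (E (s, Xc ω s t x v) 2)
  have h30 := hfA3.mul (((hE3j 0).const_mul (Real.sin (ω*(s-t))/ω)).add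
    ((hE3j 1).const_mul ((Real.cos (ω*(s-t)) - 1)/ω)))
  have h31 := hfA3.mul (((hE3j 0).const_mul ((1 - Real.cos (ω*(s-t)))/ω)).add
    ((hE3j 1).const_mul (Real.sin (ω*(s-t))/ω)))
  have h32 := hfA3.mul ((hE3j 2).const_mul (s - t))
  rw [divg_eq_sum _ _ (fun i => by
        fin_cases i
        · exact h10.differentiableAt
        · exact h11.differentiableAt
        · exact h12.differentiableAt),
      divg_eq_sum _ _ (fun i => by
        fin_cases i
        · exact h20.differentiableAt
        · exact h21.differentiableAt
        · exact h22.differentiableAt),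
      divg_eq_sum _ _ (fun i => by
        fin_cases i
        · exact h30.differentiableAt
        · exact h31.differentiableAt
        · exact h32.differentiableAt)]
  simp only [Fin.sum_univ_three, Gt, Ht, Pi.smul_apply, smul_eq_mul,
    Matrix.cons_val_zero, Matrix.cons_val_one, Matrix.head_cons,
    Matrix.cons_val_two, Matrix.tail_cons]
  simp only [Pi.mul_def, Pi.add_def, Pi.sub_def] at h10 h11 h12 h20 h21 h22 h30 h31 h32
  rw [h10.fderiv, h11.fderiv, h12.fderiv, h20.fderiv, h21.fderiv, h22.fderiv,
    h30.fderiv, h31.fderiv, h32.fderiv]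
  simp only [ContinuousLinearMap.add_apply, ContinuousLinearMap.smul_apply,
    ContinuousLinearMap.sub_apply, ContinuousLinearMap.coe_comp', Function.comp_apply,
    ContinuousLinearMap.proj_apply, ContinuousLinearMap.prod_apply,
    ContinuousLinearMap.zero_apply, ContinuousLinearMap.coe_id', id_eq, smul_eq_mul]
  simp only [Df_dir, DE_dir, Matrix.cons_val_zero, Matrix.cons_val_one, Matrix.head_cons,
    Matrix.cons_val_two, Matrix.tail_cons]
  have hpy : Real.sin (ω * (s - t)) ^ 2 + Real.cos (ω * (s - t)) ^ 2 = 1 :=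
    Real.sin_sq_add_cos_sq (ω * (s - t))
  linear_combination (E (s, Xc ω s t x v) 0 *
        (fderiv ℝ f (s, Xc ω s t x v, Vc ω s t v)) (0, 0, Pi.single 0 1)
      + E (s, Xc ω s t x v) 1 *
        (fderiv ℝ f (s, Xc ω s t x v, Vc ω s t v)) (0, 0, Pi.single 1 1)
      + E (s, Xc ω s t x v) 0 / ω *
        (fderiv ℝ f (s, Xc ω s t x v, Vc ω s t v)) (0, Pi.single 1 1, 0)
      - E (s, Xc ω s t x v) 1 / ω *
        (fderiv ℝ f (s, Xc ω s t x v, Vc ω s t v)) (0, Pi.single 0 1, 0)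
      + f (s, Xc ω s t x v, Vc ω s t v) / ω *
        (fderiv ℝ E (s, Xc ω s t x v)) (0, Pi.single 1 1) 0
      - f (s, Xc ω s t x v, Vc ω s t v) / ω *
        (fderiv ℝ E (s, Xc ω s t x v)) (0, Pi.single 0 1) 1) * hpy
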